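/- Let D_m > 0, τ > 0, L > 0, β ≥ 0, and let H be a positive integer, and set x := e^{−π² D_m τ H² / L²}. Assume x ≤ 1/100. Then for every q ∈ ℤ³ with |q_i| ≤ H/2 for each i, the aliasing error satisfies Σ_{n ∈ ℤ³, n ≠ 0} exp(−4π²|q + Hn|² D_m τ / L² − βτ) ≤ 7·x. -/

import Mathlib

open Real

private def e3 : (Fin 3 → ℤ) ≃ ℤ × ℤ × ℤ where
  toFun n := (n 0, n 1, n 2)
  invFun p := ![p.1, p.2.1, p.2.2]
  left_inv n := by funext i; fin_cases i <;> rfl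
  right_inv p := rfl

private lemma tsum_int_pow_natAbs {x : ℝ} (h0 : 0 < x) (h1 : x < 1) :
    Summable (fun m : ℤ => x ^ m.natAbs) ∧
      (∑' m : ℤ, x ^ m.natAbs) = (1 + x) / (1 - x) := by
  have hg : Summable (fun n : ℕ => x ^ n) := summable_geometric_of_lt_one h0.le h1
  have h1' : Summable (fun n : ℕ => x ^ ((n : ℤ)).natAbs) := by simpa using hg
  have h2' : Summable (fun n : ℕ => x ^ (-(n : ℤ)).natAbs) := by simpa using hg
  refine ⟨Summable.of_nat_of_neg (f := fun m : ℤ => x ^ m.natAbs) h1' h2', ?_⟩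
  rw [Summable.tsum_of_nat_of_neg (f := fun m : ℤ => x ^ m.natAbs) h1' h2']
  have e1 : (∑' n : ℕ, x ^ ((n : ℤ)).natAbs) = (1-x)⁻¹ := by
    simpa using tsum_geometric_of_lt_one h0.le h1
  have e2 : (∑' n : ℕ, x ^ (-(n : ℤ)).natAbs) = (1-x)⁻¹ := by
    simpa using tsum_geometric_of_lt_one h0.le h1
  rw [e1, e2]
  have hne : (1:ℝ) - x ≠ 0 := by linarith
  field_simp
  simp only [Int.natAbs_zero, pow_zero]; ring

/-- Summability and value of the triple product sum. -/
private lemma triple {x : ℝ} (h0 : 0 < x) (h1 : x < 1) :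
    Summable (fun n : Fin 3 → ℤ => ∏ i, x ^ (n i).natAbs) ∧
      (∑' n : Fin 3 → ℤ, ∏ i, x ^ (n i).natAbs)
        = ((1+x)/(1-x)) * (((1+x)/(1-x)) * ((1+x)/(1-x))) := by
  obtain ⟨hb, hT⟩ := tsum_int_pow_natAbs h0 h1
  set b : ℤ → ℝ := fun m => x ^ m.natAbs with hbdef
  have hbn : Summable (fun m : ℤ => ‖b m‖) := by
    refine hb.congr fun m => ?_
    rw [Real.norm_eq_abs, abs_of_nonneg (pow_nonneg h0.le _)]
  have h2 : Summable (fun p : ℤ × ℤ => b p.1 * b p.2) :=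
    summable_mul_of_summable_norm (f := b) (g := b) hbn hbn
  have h2n : Summable (fun p : ℤ × ℤ => ‖b p.1 * b p.2‖) := by
    have : ∀ p : ℤ × ℤ, ‖b p.1 * b p.2‖ = b p.1 * b p.2 := by
      intro p
      exact abs_of_nonneg (mul_nonneg (pow_nonneg h0.le _) (pow_nonneg h0.le _))
    simpa [this] using h2
  have h3 : Summable (fun p : ℤ × ℤ × ℤ => b p.1 * (b p.2.1 * b p.2.2)) :=
    summable_mul_of_summable_norm (f := b) (g := fun p : ℤ × ℤ => b p.1 * b p.2) hbn h2n
  have ht2 : (∑' p : ℤ × ℤ, b p.1 * b p.2) = ((1+x)/(1-x)) * ((1+x)/(1-x)) := by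
    rw [← tsum_mul_tsum_of_summable_norm (f := b) (g := b) hbn hbn, hT]
  have ht3 : (∑' p : ℤ × ℤ × ℤ, b p.1 * (b p.2.1 * b p.2.2))
      = ((1+x)/(1-x)) * (((1+x)/(1-x)) * ((1+x)/(1-x))) := by
    rw [← tsum_mul_tsum_of_summable_norm (f := b) (g := fun p : ℤ × ℤ => b p.1 * b p.2) hbn h2n, hT, ht2]
  have hGe : ∀ p : ℤ × ℤ × ℤ, (∏ i, x ^ ((e3.symm p) i).natAbs)
      = b p.1 * (b p.2.1 * b p.2.2) := by
    intro p
    rw [Fin.prod_univ_three]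
    rw [mul_assoc]; rfl
  constructor
  · rw [← Equiv.summable_iff e3.symm]
    refine h3.congr fun p => ?_
    exact (hGe p).symm
  · rw [← Equiv.tsum_eq e3.symm]
    rw [tsum_congr hGe, ht3]

set_option maxHeartbeats 2000000 in
/-- Quantitative aliasing-error bound (Lemma 2.2): with
`x = exp(−π² D_m τ H²/L²) ≤ 1/100`, for each frequency `q ∈ U_H` the sum of the
non-principal aliases of the heat kernel is at most `7·x`. -/
theorem stmt_4 (Dm τ L β : ℝ) (hDm : 0 < Dm) (hτ : 0 < τ) (hL : 0 < L) (hβ : 0 ≤ β)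
    (H : ℕ) (hH : 0 < H)
    (x : ℝ) (hx : x = Real.exp (-(π ^ 2) * Dm * τ * (H : ℝ) ^ 2 / L ^ 2))
    (hsmall : x ≤ 1 / 100) :
    ∀ q : Fin 3 → ℤ, (∀ i, |(q i : ℝ)| ≤ (H : ℝ) / 2) →
      (∑' n : {n : Fin 3 → ℤ // n ≠ 0},
          Real.exp (-(4 * π ^ 2 * (∑ i, ((q i : ℝ) + (H : ℝ) * ((n : Fin 3 → ℤ) i : ℝ)) ^ 2))
            * Dm * τ / L ^ 2 - β * τ)) ≤ 7 * x := by
  intro q hq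
  have hx0 : 0 < x := hx ▸ Real.exp_pos _
  have hx1 : x < 1 := lt_of_le_of_lt hsmall (by norm_num)
  have hHpos : (0:ℝ) < (H:ℝ) := by exact_mod_cast hH
  -- per-coordinate bound
  have key : ∀ i : Fin 3, ∀ m : ℤ,
      Real.exp (-(4 * π ^ 2 * ((q i : ℝ) + (H : ℝ) * (m : ℝ)) ^ 2) * Dm * τ / L ^ 2)
        ≤ x ^ m.natAbs := by
    intro i m
    set t : ℝ := (q i : ℝ) with ht
    have htb : |t| ≤ (H:ℝ)/2 := hq i
    have claim : (m.natAbs : ℝ) * (H:ℝ)^2 ≤ 4 * (t + (H:ℝ) * (m:ℝ))^2 := by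
      rcases eq_or_ne m 0 with rfl | hm
      · simp; positivity
      · set a : ℝ := (m.natAbs : ℝ) with ha
        have hna : 1 ≤ m.natAbs := Int.natAbs_pos.mpr hm
        have ha1 : 1 ≤ a := by rw [ha]; exact_mod_cast hna
        have habs : |(m:ℝ)| = a := by rw [ha, Nat.cast_natAbs, Int.cast_abs]
        have h1 : (H:ℝ) * a - (H:ℝ)/2 ≤ |t + (H:ℝ)*(m:ℝ)| := by
          have : |(H:ℝ)*(m:ℝ)| - |t| ≤ |t + (H:ℝ)*(m:ℝ)| := by
            have := abs_sub_abs_le_abs_sub ((H:ℝ)*(m:ℝ)) (-t)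
            simp only [abs_neg] at this
            calc |(H:ℝ)*(m:ℝ)| - |t| ≤ |(H:ℝ)*(m:ℝ) - (-t)| := this
              _ = |t + (H:ℝ)*(m:ℝ)| := by rw [sub_neg_eq_add, add_comm]
          have h2 : |(H:ℝ)*(m:ℝ)| = (H:ℝ)*a := by
            rw [abs_mul, abs_of_pos hHpos, habs]
          linarith
        have h0 : 0 ≤ (H:ℝ)*a - (H:ℝ)/2 := by nlinarith
        have hsq : ((H:ℝ)*a - (H:ℝ)/2)^2 ≤ (t + (H:ℝ)*(m:ℝ))^2 := by
          have := sq_abs (t + (H:ℝ)*(m:ℝ))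
          nlinarith [abs_nonneg (t + (H:ℝ)*(m:ℝ))]
        nlinarith [hsq, ha1, hHpos,
          mul_nonneg (mul_nonneg (sub_nonneg.2 ha1) (by linarith : (0:ℝ) ≤ 4*a-1)) (sq_nonneg (H:ℝ))]
    -- turn into the exponential inequality
    have hxpow : (x : ℝ) ^ m.natAbs
        = Real.exp ((m.natAbs : ℝ) * (-(π ^ 2) * Dm * τ * (H : ℝ) ^ 2 / L ^ 2)) := by
      rw [hx, ← Real.exp_nat_mul]
    rw [hxpow]
    apply Real.exp_le_exp.mpr
    have hP : (0:ℝ) ≤ π^2 * Dm * τ * (L^2)⁻¹ := by positivity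
    have h5 := mul_le_mul_of_nonneg_right claim hP
    rw [div_eq_mul_inv, div_eq_mul_inv]
    nlinarith [h5]
  -- termwise bound by the product
  have hterm : ∀ n : Fin 3 → ℤ,
      Real.exp (-(4 * π ^ 2 * (∑ i, ((q i : ℝ) + (H : ℝ) * (n i : ℝ)) ^ 2))
            * Dm * τ / L ^ 2 - β * τ)
        ≤ ∏ i, x ^ (n i).natAbs := by
    intro n
    have hsplit : Real.exp (-(4 * π ^ 2 * (∑ i, ((q i : ℝ) + (H : ℝ) * (n i : ℝ)) ^ 2))
            * Dm * τ / L ^ 2 - β * τ)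
        = (∏ i, Real.exp (-(4 * π ^ 2 * ((q i : ℝ) + (H : ℝ) * (n i : ℝ)) ^ 2) * Dm * τ / L ^ 2))
            * Real.exp (-(β * τ)) := by
      rw [← Real.exp_sum, ← Real.exp_add]
      congr 1
      rw [Fin.sum_univ_three, Fin.sum_univ_three]
      ring
    rw [hsplit]
    have h1 : (∏ i, Real.exp (-(4 * π ^ 2 * ((q i : ℝ) + (H : ℝ) * (n i : ℝ)) ^ 2) * Dm * τ / L ^ 2))
        ≤ ∏ i, x ^ (n i).natAbs :=
      Finset.prod_le_prod (fun i _ => (Real.exp_pos _).le) (fun i _ => key i (n i))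
    have h2 : Real.exp (-(β * τ)) ≤ 1 := by
      rw [Real.exp_le_one_iff]; nlinarith
    calc (∏ i, Real.exp (-(4 * π ^ 2 * ((q i : ℝ) + (H : ℝ) * (n i : ℝ)) ^ 2) * Dm * τ / L ^ 2))
            * Real.exp (-(β * τ))
        ≤ (∏ i, x ^ (n i).natAbs) * 1 := by
          apply mul_le_mul h1 h2 (Real.exp_pos _).le
          exact Finset.prod_nonneg fun i _ => pow_nonneg hx0.le _
      _ = ∏ i, x ^ (n i).natAbs := mul_one _
  obtain ⟨hG, hGval⟩ := triple hx0 hx1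
  set G : (Fin 3 → ℤ) → ℝ := fun n => ∏ i, x ^ (n i).natAbs with hGdef
  -- summability on the subtype
  have hGsub : Summable (fun n : {n : Fin 3 → ℤ // n ≠ 0} => G n.val) :=
    hG.comp_injective Subtype.val_injective
  have hFsub : Summable (fun n : {n : Fin 3 → ℤ // n ≠ 0} =>
      Real.exp (-(4 * π ^ 2 * (∑ i, ((q i : ℝ) + (H : ℝ) * ((n : Fin 3 → ℤ) i : ℝ)) ^ 2))
            * Dm * τ / L ^ 2 - β * τ)) :=
    Summable.of_nonneg_of_le (fun n => (Real.exp_pos _).le) (fun n => hterm n.val) hGsub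
  have step1 : (∑' n : {n : Fin 3 → ℤ // n ≠ 0},
      Real.exp (-(4 * π ^ 2 * (∑ i, ((q i : ℝ) + (H : ℝ) * ((n : Fin 3 → ℤ) i : ℝ)) ^ 2))
            * Dm * τ / L ^ 2 - β * τ))
      ≤ ∑' n : {n : Fin 3 → ℤ // n ≠ 0}, G n.val :=
    Summable.tsum_le_tsum (fun n => hterm n.val) hFsub hGsub
  -- the subtype sum equals total minus G 0
  have hcompl : (∑' n : {n : Fin 3 → ℤ // n ≠ 0}, G n.val)
      = (∑' n : Fin 3 → ℤ, G n) - G 0 := by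
    have h := Summable.tsum_subtype_add_tsum_subtype_compl hG ({0} : Set (Fin 3 → ℤ))
    have hsingle : (∑' n : ({0} : Set (Fin 3 → ℤ)), G n) = G 0 := tsum_singleton 0 G
    have heq : (∑' n : (({0} : Set (Fin 3 → ℤ))ᶜ : Set (Fin 3 → ℤ)), G n)
        = ∑' n : {n : Fin 3 → ℤ // n ≠ 0}, G n.val := rfl
    rw [hsingle, heq] at h
    linarith
  have hG0 : G 0 = 1 := by simp [hGdef]
  -- final numeric bound
  set T : ℝ := (1+x)/(1-x) with hT
  have h1x : (0:ℝ) < 1 - x := by linarith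
  have hfinal : T * (T * T) - 1 ≤ 7 * x := by
    rw [hT]
    have hcube : (1+x)/(1-x) * ((1+x)/(1-x) * ((1+x)/(1-x))) = (1+x)^3/(1-x)^3 := by
      field_simp
    rw [hcube, div_sub' (by positivity), div_le_iff₀ (by positivity)]
    nlinarith [mul_le_mul_of_nonneg_left hsmall hx0.le,
      mul_le_mul_of_nonneg_left (mul_le_mul_of_nonneg_left hsmall hx0.le) hx0.le,
      sq_nonneg x, hx0.le]
  calc (∑' n : {n : Fin 3 → ℤ // n ≠ 0},
      Real.exp (-(4 * π ^ 2 * (∑ i, ((q i : ℝ) + (H : ℝ) * ((n : Fin 3 → ℤ) i : ℝ)) ^ 2))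
            * Dm * τ / L ^ 2 - β * τ))
      ≤ ∑' n : {n : Fin 3 → ℤ // n ≠ 0}, G n.val := step1
    _ = (∑' n : Fin 3 → ℤ, G n) - G 0 := hcompl
    _ = T * (T * T) - 1 := by rw [hGval, hG0]
    _ ≤ 7 * x := hfinal
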